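/- Let f be a routing circulation on the abstracted hierarchical routing graph H̃^e with κ layers, where edges between layer i and layer i+1 have length γ·D^i with D ≥ 2. Then f can be written as f = Σ_{i=1}^k c_i where each c_i is a circulation supported on a single monotone cycle (a simple cycle composed of one monotonically layer-increasing path, one monotonically layer-decreasing path, and optionally the extra edge e), and Σ_{i=1}^k ‖L̃ c_i‖₁ ≤ 4κ ‖L̃ f‖₁. -/

import Mathlib

set_option linter.unusedSectionVars false
set_option linter.unusedVariables false
set_option maxHeartbeats 1000000


open BigOperators

/-- The indicator flow of a path given as a list of edges. -/
def pathInd {E : Type*} [DecidableEq E] (l : List E) : E → ℝ := fun e => (l.count e : ℝ)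

/-- `l` is a nonempty edge-path starting at vertex `w` (edges chained head-to-tail). -/
def IsPathFrom {W E : Type*} (s t : E → W) (w : W) (l : List E) : Prop :=
  l ≠ [] ∧ l.Chain' (fun a b => t a = s b) ∧ ∀ a ∈ l.head?, s a = w

/-- Net flow at vertex `w` of a flow `F = (edge flows, flow on the extra edge u→v)`. -/
def net {W E : Type*} [Fintype E] [DecidableEq W] (s t : E → W) (u v : W)
    (F : (E → ℝ) × ℝ) (w : W) : ℝ :=
  (∑ e, if t e = w then F.1 e else 0) - (∑ e, if s e = w then F.1 e else 0)
    + (if w = v then F.2 else 0) - (if w = u then F.2 else 0)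

/-- `F` is a circulation on the abstracted HRG with extra edge `u→v`. -/
def IsCirc {W E : Type*} [Fintype E] [DecidableEq W] (s t : E → W) (u v : W)
    (F : (E → ℝ) × ℝ) : Prop :=
  ∀ w, net s t u v F w = 0

/-- `F` is a routing circulation: a circulation composed of flow on the extra edge plus a
sum of monotonically increasing path flows starting at the endpoints `u` and `v` of the
extra edge, where all paths from `v` carry flow of one sign and all paths from `u` flow
of the other sign. -/
def IsRoutingCirc {W E : Type*} [Fintype E] [DecidableEq W] [DecidableEq E]
    (s t : E → W) (u v : W) (F : (E → ℝ) × ℝ) : Prop :=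
  IsCirc s t u v F ∧ ∃ ε : ℝ, (ε = 1 ∨ ε = -1) ∧
    ∃ (n₁ n₂ : ℕ) (Pv : Fin n₁ → List E) (μv : Fin n₁ → ℝ)
      (Pu : Fin n₂ → List E) (μu : Fin n₂ → ℝ),
      (∀ i, IsPathFrom s t v (Pv i) ∧ 0 < ε * μv i) ∧
      (∀ i, IsPathFrom s t u (Pu i) ∧ ε * μu i < 0) ∧
      F.1 = fun e => (∑ i, μv i * pathInd (Pv i) e) + (∑ i, μu i * pathInd (Pu i) e)

/-- `c` is a circulation supported on a single monotone cycle: a simple cycle composed of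
a monotonically (layer-)increasing path `P`, a monotonically decreasing path (the reverse
of the increasing path `Q`), and optionally the extra edge. -/
def IsMonotoneCycle {W E : Type*} [Fintype E] [DecidableEq W] [DecidableEq E]
    (s t : E → W) (u v : W) (c : (E → ℝ) × ℝ) : Prop :=
  IsCirc s t u v c ∧ ∃ (μ : ℝ) (P Q : List E),
    P.Chain' (fun a b => t a = s b) ∧ Q.Chain' (fun a b => t a = s b) ∧
    P.Nodup ∧ Q.Nodup ∧ (∀ a ∈ P, a ∉ Q) ∧
    c.1 = (fun e => μ * (pathInd P e - pathInd Q e)) ∧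
    (c.2 = μ ∨ c.2 = -μ ∨ c.2 = 0)



open BigOperators

section Helpers

variable {W E : Type*} [DecidableEq W] [DecidableEq E] (s t : E → W)

/-- `l` is a chain of edges from vertex `a` to vertex `b`. -/
def CFT (a b : W) (l : List E) : Prop :=
  l.Chain' (fun e f => t e = s f) ∧ (∀ e ∈ l.head?, s e = a) ∧
    (∀ e ∈ l.getLast?, t e = b) ∧ (l = [] → a = b)

lemma cft_nil (a : W) : CFT s t a a [] :=
  ⟨List.isChain_nil, by simp, by simp, fun _ => rfl⟩

lemma cft_nil_iff {a b : W} : CFT s t a b [] ↔ a = b := by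
  constructor
  · rintro ⟨-, -, -, h⟩; exact h rfl
  · rintro rfl; exact cft_nil s t a

lemma cft_cons {a b : W} {f : E} {l : List E} :
    CFT s t a b (f :: l) ↔ s f = a ∧ CFT s t (t f) b l := by
  constructor
  · rintro ⟨hc, hh, hl, -⟩
    rw [List.Chain', List.isChain_cons] at hc
    refine ⟨hh f rfl, hc.2, fun e he => (hc.1 e he).symm, ?_, ?_⟩
    · intro e he
      apply hl
      cases l with
      | nil => simp at he
      | cons g l' => rw [List.getLast?_cons_cons]; exact he
    · rintro rfl
      have := hl f (by simp)
      exact this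
  · rintro ⟨hsf, hc, hh, hl, hnil⟩
    refine ⟨?_, ?_, ?_, ?_⟩
    · rw [List.Chain', List.isChain_cons]
      exact ⟨fun y hy => (hh y hy).symm, hc⟩
    · intro e he; simp at he; subst he; exact hsf
    · intro e he
      cases l with
      | nil => simp at he; subst he; simpa using hnil rfl
      | cons g l' => exact hl e (by rwa [List.getLast?_cons_cons] at he)
    · intro h; simp at h

lemma cft_append_split {a x : W} {e : E} {l₁ l₂ : List E}
    (h : CFT s t a x (l₁ ++ e :: l₂)) : CFT s t a (s e) l₁ ∧ CFT s t (t e) x l₂ := by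
  induction l₁ generalizing a with
  | nil =>
    rw [List.nil_append, cft_cons] at h
    exact ⟨(cft_nil_iff s t).2 h.1.symm, h.2⟩
  | cons f l₁ ih =>
    rw [List.cons_append, cft_cons] at h
    obtain ⟨hsf, h'⟩ := h
    obtain ⟨h1, h2⟩ := ih h'
    exact ⟨(cft_cons s t).2 ⟨hsf, h1⟩, h2⟩

lemma cft_append_edge {a b : W} {l : List E} {e : E}
    (h : CFT s t a b l) (hse : s e = b) : CFT s t a (t e) (l ++ [e]) := by
  induction l generalizing a with
  | nil =>
    rw [cft_nil_iff] at h; subst h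
    rw [List.nil_append, cft_cons]
    exact ⟨hse, cft_nil s t (t e)⟩
  | cons f l ih =>
    rw [cft_cons] at h
    rw [List.cons_append, cft_cons]
    exact ⟨h.1, ih h.2⟩

variable (layer : W → ℕ)

lemma cft_layer (hup : ∀ e, layer (t e) = layer (s e) + 1) {a b : W} {l : List E} (h : CFT s t a b l) :
    layer b = layer a + l.length := by
  induction l generalizing a with
  | nil => rw [cft_nil_iff] at h; subst h; simp
  | cons f l ih =>
    rw [cft_cons] at h
    obtain ⟨hsf, h'⟩ := h
    have := ih h'
    rw [this, hup f, hsf]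
    simp; omega

lemma cft_layer_le (hup : ∀ e, layer (t e) = layer (s e) + 1) {a b : W} {l : List E} (h : CFT s t a b l) :
    ∀ g ∈ l, layer a ≤ layer (s g) := by
  induction l generalizing a with
  | nil => intro g hg; simp at hg
  | cons f l ih =>
    rw [cft_cons] at h
    obtain ⟨hsf, h'⟩ := h
    intro g hg
    rcases List.mem_cons.1 hg with rfl | hg
    · rw [hsf]
    · have := ih h' g hg
      rw [hup f, hsf] at this
      omega

lemma cft_nodup (hup : ∀ e, layer (t e) = layer (s e) + 1) {a b : W} {l : List E} (h : CFT s t a b l) : l.Nodup := by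
  induction l generalizing a with
  | nil => exact List.nodup_nil
  | cons f l ih =>
    rw [cft_cons] at h
    obtain ⟨hsf, h'⟩ := h
    refine List.nodup_cons.2 ⟨?_, ih h'⟩
    intro hmem
    have := cft_layer_le s t layer hup h' f hmem
    rw [hup f] at this
    omega

end Helpers

section Net

variable {W E : Type*} [Fintype E] [DecidableEq W] [DecidableEq E] (s t : E → W)

lemma count_cons_real (f e : E) (l : List E) :
    ((f :: l).count e : ℝ) = (l.count e : ℝ) + (if e = f then 1 else 0) := by
  rw [List.count_cons]
  push_cast
  by_cases h : e = f
  · subst h; simp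
  · simp [h, Ne.symm h]

lemma net_chain (μ : ℝ) {a b : W} {l : List E} (h : CFT s t a b l) (w : W) :
    ((∑ e, if t e = w then μ * (l.count e : ℝ) else 0)
      - (∑ e, if s e = w then μ * (l.count e : ℝ) else 0))
      = μ * ((if w = b then 1 else 0) - (if w = a then 1 else 0)) := by
  induction l generalizing a with
  | nil =>
    rw [cft_nil_iff] at h; subst h
    simp
  | cons f l ih =>
    rw [cft_cons] at h
    obtain ⟨hsf, h'⟩ := h
    have key : ∀ g : E → W,
        (∑ e, if g e = w then μ * ((f :: l).count e : ℝ) else 0)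
          = (∑ e, if g e = w then μ * (l.count e : ℝ) else 0)
            + (if g f = w then μ else 0) := by
      intro g
      have hpt : ∀ e : E, (if g e = w then μ * ((f :: l).count e : ℝ) else 0)
          = (if g e = w then μ * (l.count e : ℝ) else 0)
            + (if e = f then (if g e = w then μ else 0) else 0) := by
        intro e
        rw [count_cons_real]
        split_ifs <;> ring
      rw [Finset.sum_congr rfl (fun e _ => hpt e), Finset.sum_add_distrib,
        Finset.sum_ite_eq' Finset.univ f (fun e => if g e = w then μ else 0)]
      simp
    rw [key t, key s, hsf]
    have ihh := ih h'
    have expand : ∀ (z : W) (r : ℝ), (if z = w then r else 0) = r * (if w = z then 1 else 0) := by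
      intro z r; by_cases hc : w = z
      · subst hc; simp
      · rw [if_neg (fun q => hc q.symm), if_neg hc]; ring
    calc (∑ e, if t e = w then μ * (l.count e:ℝ) else 0) + (if t f = w then μ else 0)
          - ((∑ e, if s e = w then μ * (l.count e:ℝ) else 0) + (if a = w then μ else 0))
        = ((∑ e, if t e = w then μ * (l.count e:ℝ) else 0)
            - (∑ e, if s e = w then μ * (l.count e:ℝ) else 0))
          + (if t f = w then μ else 0) - (if a = w then μ else 0) := by ring
      _ = μ * ((if w = b then 1 else 0) - (if w = t f then 1 else 0))
          + μ * (if w = t f then 1 else 0) - μ * (if w = a then 1 else 0) := by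
          rw [ihh, expand (t f) μ, expand a μ]
      _ = μ * ((if w = b then 1 else 0) - (if w = a then 1 else 0)) := by ring

lemma sum_len_count (len : E → ℝ) (l : List E) :
    (∑ f, len f * (l.count f : ℝ)) = (l.map len).sum := by
  induction l with
  | nil => simp
  | cons a l ih =>
    have hpt : ∀ f : E, len f * ((a :: l).count f : ℝ)
        = len f * (l.count f : ℝ) + (if f = a then len f else 0) := by
      intro f
      rw [count_cons_real]
      split_ifs <;> ring
    rw [Finset.sum_congr rfl (fun f _ => hpt f), Finset.sum_add_distrib, ih,
      Finset.sum_ite_eq' Finset.univ a len]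
    simp [add_comm]

lemma sum_count (l : List E) : (∑ f, ((l.count f : ℝ))) = l.length := by
  have := sum_len_count (fun _ => (1:ℝ)) l
  simpa using this

end Net

section LenBound

variable {W E : Type*} [DecidableEq W] [DecidableEq E] (s t : E → W)

lemma cft_len_bound (layer : W → ℕ) (hup : ∀ e, layer (t e) = layer (s e) + 1)
    (γ D : ℝ) (hγ : 0 < γ) (hD : 2 ≤ D)
    (len : E → ℝ) (hlen : ∀ e, len e = γ * D ^ layer (s e))
    {a b : W} {l : List E} (h : CFT s t a b l) :
    (D - 1) * (l.map len).sum ≤ γ * (D ^ layer b - D ^ layer a) := by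
  induction l generalizing a with
  | nil =>
    rw [cft_nil_iff] at h; subst h
    simp
  | cons f l ih =>
    rw [cft_cons] at h
    obtain ⟨hsf, h'⟩ := h
    have ihh := ih h'
    have hf : len f = γ * D ^ layer a := by rw [hlen, hsf]
    have htf : layer (t f) = layer a + 1 := by rw [hup, hsf]
    rw [htf] at ihh
    have hpow : D ^ (layer a + 1) = D ^ layer a * D := pow_succ D (layer a)
    rw [hpow] at ihh
    have hDpos : (0:ℝ) ≤ D ^ layer a := by positivity
    simp only [List.map_cons, List.sum_cons]
    nlinarith [ihh, hDpos, hγ.le]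

end LenBound

section Split

variable {W E : Type*} [Fintype E] [DecidableEq W] [DecidableEq E]

lemma split_base (s t : E → W) (layer : W → ℕ) (hup : ∀ e, layer (t e) = layer (s e) + 1)
    (u v : W) (len : E → ℝ) (hl0 : ∀ f, 0 ≤ len f) (le : ℝ) (hle : 0 ≤ le)
    (μ c2 : ℝ) (a1 a2 x : W) (P Q : List E)
    (hP : CFT s t a1 x P) (hQ : CFT s t a2 x Q)
    (hspec : (a1 = a2 ∧ c2 = 0) ∨ (a1 = v ∧ a2 = u ∧ c2 = μ) ∨ (a1 = u ∧ a2 = v ∧ c2 = -μ))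
    (hdisj : ∀ a ∈ P, a ∉ Q) :
    IsMonotoneCycle s t u v ((fun f => μ * ((P.count f : ℝ) - (Q.count f : ℝ))), c2) := by
  constructor
  · -- circulation
    intro w
    unfold net
    simp only
    have split_ite : ∀ g : E → W,
        (∑ e, if g e = w then μ * ((P.count e : ℝ) - (Q.count e : ℝ)) else 0)
          = (∑ e, if g e = w then μ * (P.count e : ℝ) else 0)
            - (∑ e, if g e = w then μ * (Q.count e : ℝ) else 0) := by
      intro g
      rw [← Finset.sum_sub_distrib]
      refine Finset.sum_congr rfl fun e _ => ?_
      split_ifs <;> ring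
    have iteR : ∀ (p : Prop) [Decidable p] (r : ℝ),
        (if p then r else 0) = r * (if p then 1 else 0) := by
      intro p _ r; split_ifs <;> ring
    rw [split_ite t, split_ite s, iteR (w = v) c2, iteR (w = u) c2]
    have h1 := net_chain s t μ hP w
    have h2 := net_chain s t μ hQ w
    rcases hspec with ⟨h12, hc⟩ | ⟨h1v, h2u, hc⟩ | ⟨h1u, h2v, hc⟩
    · rw [h12] at h1
      rw [hc]
      linear_combination h1 - h2
    · rw [h1v] at h1; rw [h2u] at h2
      rw [hc]
      linear_combination h1 - h2
    · rw [h1u] at h1; rw [h2v] at h2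
      rw [hc]
      linear_combination h1 - h2
  · refine ⟨μ, P, Q, hP.1, hQ.1, cft_nodup s t layer hup hP, cft_nodup s t layer hup hQ,
      hdisj, rfl, ?_⟩
    rcases hspec with ⟨-, rfl⟩ | ⟨-, -, rfl⟩ | ⟨-, -, rfl⟩
    · right; right; rfl
    · left; rfl
    · right; left; rfl

end Split

section SplitRec

variable {W E : Type*} [Fintype E] [DecidableEq W] [DecidableEq E]

lemma split_rec (s t : E → W) (layer : W → ℕ) (hup : ∀ e, layer (t e) = layer (s e) + 1)
    (u v : W) (len : E → ℝ) (hl0 : ∀ f, 0 ≤ len f) (le : ℝ) (hle : 0 ≤ le) :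
    ∀ n : ℕ, ∀ P Q : List E, P.length + Q.length ≤ n →
    ∀ (μ c2 : ℝ) (a1 a2 x : W), CFT s t a1 x P → CFT s t a2 x Q →
    ((a1 = a2 ∧ c2 = 0) ∨ (a1 = v ∧ a2 = u ∧ c2 = μ) ∨ (a1 = u ∧ a2 = v ∧ c2 = -μ)) →
    ∃ cl : List ((E → ℝ) × ℝ),
      (∀ c ∈ cl, IsMonotoneCycle s t u v c) ∧
      (∀ f, (cl.map (fun c => c.1 f)).sum = μ * ((P.count f : ℝ) - (Q.count f : ℝ))) ∧
      ((cl.map Prod.snd).sum = c2) ∧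
      ((cl.map (fun c => (∑ f, len f * |c.1 f|) + le * |c.2|)).sum
          ≤ |μ| * ((P.map len).sum + (Q.map len).sum) + le * |c2|) := by
  have emit : ∀ (P Q : List E) (μ c2 : ℝ) (a1 a2 x : W), CFT s t a1 x P → CFT s t a2 x Q →
      ((a1 = a2 ∧ c2 = 0) ∨ (a1 = v ∧ a2 = u ∧ c2 = μ) ∨ (a1 = u ∧ a2 = v ∧ c2 = -μ)) →
      (∀ a ∈ P, a ∉ Q) →
      ∃ cl : List ((E → ℝ) × ℝ),
        (∀ c ∈ cl, IsMonotoneCycle s t u v c) ∧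
        (∀ f, (cl.map (fun c => c.1 f)).sum = μ * ((P.count f : ℝ) - (Q.count f : ℝ))) ∧
        ((cl.map Prod.snd).sum = c2) ∧
        ((cl.map (fun c => (∑ f, len f * |c.1 f|) + le * |c.2|)).sum
            ≤ |μ| * ((P.map len).sum + (Q.map len).sum) + le * |c2|) := by
    intro P Q μ c2 a1 a2 x hP hQ hspec hdisj
    refine ⟨[((fun f => μ * ((P.count f : ℝ) - (Q.count f : ℝ))), c2)], ?_, ?_, ?_, ?_⟩
    · intro c hc
      simp only [List.mem_singleton] at hc
      subst hc
      exact split_base s t layer hup u v len hl0 le hle μ c2 a1 a2 x P Q hP hQ hspec hdisj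
    · intro f; simp
    · simp
    · simp only [List.map_cons, List.map_nil, List.sum_cons, List.sum_nil, add_zero]
      have hpt : ∀ f : E, len f * |μ * ((P.count f : ℝ) - (Q.count f : ℝ))|
          ≤ |μ| * (len f * (P.count f : ℝ)) + |μ| * (len f * (Q.count f : ℝ)) := by
        intro f
        have h1 : |(P.count f : ℝ) - (Q.count f : ℝ)| ≤ (P.count f : ℝ) + (Q.count f : ℝ) := by
          have h2 := abs_add_le ((P.count f : ℝ)) (-(Q.count f : ℝ))
          simp only [abs_neg, Nat.abs_cast] at h2
          rw [sub_eq_add_neg]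
          exact h2
        calc len f * |μ * ((P.count f : ℝ) - (Q.count f : ℝ))|
            = |μ| * (len f * |(P.count f : ℝ) - (Q.count f : ℝ)|) := by
              rw [abs_mul]; ring
          _ ≤ |μ| * (len f * ((P.count f : ℝ) + (Q.count f : ℝ))) := by
              apply mul_le_mul_of_nonneg_left _ (abs_nonneg μ)
              exact mul_le_mul_of_nonneg_left h1 (hl0 f)
          _ = |μ| * (len f * (P.count f : ℝ)) + |μ| * (len f * (Q.count f : ℝ)) := by ring
      have hsum := Finset.sum_le_sum (s := Finset.univ) (fun f _ => hpt f)
      rw [Finset.sum_add_distrib, ← Finset.mul_sum, ← Finset.mul_sum,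
        sum_len_count len P, sum_len_count len Q] at hsum
      have := add_le_add_left hsum (le * |c2|)
      calc (∑ f, len f * |μ * ((P.count f : ℝ) - (Q.count f : ℝ))|) + le * |c2|
          ≤ |μ| * (P.map len).sum + |μ| * (Q.map len).sum + le * |c2| := this
        _ = |μ| * ((P.map len).sum + (Q.map len).sum) + le * |c2| := by ring
  intro n
  induction n with
  | zero =>
    intro P Q hn μ c2 a1 a2 x hP hQ hspec
    have hP0 : P = [] := List.eq_nil_of_length_eq_zero (by omega)
    have hQ0 : Q = [] := List.eq_nil_of_length_eq_zero (by omega)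
    subst hP0; subst hQ0
    exact emit [] [] μ c2 a1 a2 x hP hQ hspec (by simp)
  | succ n ih =>
    intro P Q hn μ c2 a1 a2 x hP hQ hspec
    by_cases hd : ∀ a ∈ P, a ∉ Q
    · exact emit P Q μ c2 a1 a2 x hP hQ hspec hd
    · push_neg at hd
      obtain ⟨a, haP, haQ⟩ := hd
      obtain ⟨P₁, P₂, rfl⟩ := List.append_of_mem haP
      obtain ⟨Q₁, Q₂, rfl⟩ := List.append_of_mem haQ
      obtain ⟨hP1, hP2⟩ := cft_append_split s t hP
      obtain ⟨hQ1, hQ2⟩ := cft_append_split s t hQ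
      have hlen1 : P₁.length + Q₁.length ≤ n := by
        simp only [List.length_append, List.length_cons] at hn
        omega
      have hlen2 : P₂.length + Q₂.length ≤ n := by
        simp only [List.length_append, List.length_cons] at hn
        omega
      obtain ⟨cl₁, hm1, hf1, hc1, hco1⟩ :=
        ih P₁ Q₁ hlen1 μ c2 a1 a2 (s a) hP1 hQ1 hspec
      obtain ⟨cl₂, hm2, hf2, hc2', hco2⟩ :=
        ih P₂ Q₂ hlen2 μ 0 (t a) (t a) x hP2 hQ2 (Or.inl ⟨rfl, rfl⟩)
      refine ⟨cl₁ ++ cl₂, ?_, ?_, ?_, ?_⟩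
      · intro c hc
        rcases List.mem_append.1 hc with h | h
        · exact hm1 c h
        · exact hm2 c h
      · intro f
        rw [List.map_append, List.sum_append, hf1 f, hf2 f]
        have hcp : ((P₁ ++ a :: P₂).count f : ℝ)
            = (P₁.count f : ℝ) + (P₂.count f : ℝ) + (if f = a then 1 else 0) := by
          rw [List.count_append]
          push_cast
          rw [count_cons_real]
          ring
        have hcq : ((Q₁ ++ a :: Q₂).count f : ℝ)
            = (Q₁.count f : ℝ) + (Q₂.count f : ℝ) + (if f = a then 1 else 0) := by
          rw [List.count_append]
          push_cast
          rw [count_cons_real]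
          ring
        rw [hcp, hcq]
        ring
      · rw [List.map_append, List.sum_append, hc1, hc2']
        ring
      · rw [List.map_append, List.sum_append]
        have hlp : ((P₁ ++ a :: P₂).map len).sum
            = (P₁.map len).sum + len a + (P₂.map len).sum := by
          rw [List.map_append, List.sum_append, List.map_cons, List.sum_cons]
          ring
        have hlq : ((Q₁ ++ a :: Q₂).map len).sum
            = (Q₁.map len).sum + len a + (Q₂.map len).sum := by
          rw [List.map_append, List.sum_append, List.map_cons, List.sum_cons]
          ring
        rw [hlp, hlq]
        have h0 : le * |(0:ℝ)| = 0 := by simp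
        rw [h0] at hco2
        nlinarith [mul_nonneg (abs_nonneg μ) (hl0 a), hco1, hco2]

end SplitRec

section OfChain

variable {W E : Type*} [DecidableEq W] [DecidableEq E] (s t : E → W)

lemma cft_of_chain {w : W} {l : List E} (hne : l ≠ [])
    (hchain : l.Chain' (fun a b => t a = s b)) (hhead : ∀ a ∈ l.head?, s a = w) :
    ∃ b : W, CFT s t w b l := by
  induction l generalizing w with
  | nil => exact absurd rfl hne
  | cons f l ih =>
    cases l with
    | nil =>
      refine ⟨t f, (cft_cons s t).2 ⟨hhead f rfl, cft_nil s t (t f)⟩⟩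
    | cons g l' =>
      rw [List.Chain', List.isChain_cons] at hchain
      obtain ⟨b, hb⟩ := ih (w := t f) (by simp) hchain.2
        (fun a ha => by
          have hag : a = g := by have := ha; simp at this; exact this.symm
          subst hag
          exact (hchain.1 a (by simp)).symm)
      exact ⟨b, (cft_cons s t).2 ⟨hhead f rfl, hb⟩⟩

end OfChain

/-- Flow decomposition on the abstracted HRG: a layered graph with `κ` layers in which
every edge goes up exactly one layer and has length `γ·D^{layer of its tail}` (`D ≥ 2`),
plus one extra edge between two layer-`0` vertices `u`, `v` of length `le`.  Any routing
circulation `F` can be decomposed as a sum of circulations supported on monotone cycles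
whose total ℓ1-length is at most `4κ` times the ℓ1-length of `F`. -/
theorem stmt_15 {W E : Type*} [Fintype W] [Fintype E] [DecidableEq W] [DecidableEq E]
    (κ : ℕ) (layer : W → ℕ) (hκ : ∀ w, layer w < κ)
    (s t : E → W) (hup : ∀ e, layer (t e) = layer (s e) + 1)
    (γ D : ℝ) (hγ : 0 < γ) (hD : 2 ≤ D)
    (len : E → ℝ) (hlen : ∀ e, len e = γ * D ^ layer (s e))
    (u v : W) (hu : layer u = 0) (hv : layer v = 0)
    (le : ℝ) (hle : 0 < le)
    (F : (E → ℝ) × ℝ) (hF : IsRoutingCirc s t u v F) :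
    ∃ (k : ℕ) (cs : Fin k → (E → ℝ) × ℝ),
      (∀ i, IsMonotoneCycle s t u v (cs i)) ∧
      (F.1 = fun e => ∑ i, (cs i).1 e) ∧ (F.2 = ∑ i, (cs i).2) ∧
      (∑ i, ((∑ e, len e * |(cs i).1 e|) + le * |(cs i).2|))
        ≤ 4 * κ * ((∑ e, len e * |F.1 e|) + le * |F.2|) := by
  classical
  obtain ⟨hCirc, ε, hε, n₁, n₂, Pv, μv, Pu, μu, hPv, hPu, hF1⟩ := hF
  have hl0 : ∀ f, 0 ≤ len f := fun f => by
    rw [hlen]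
    have : (0:ℝ) < D := by linarith
    positivity
  have hκ1 : 1 ≤ κ := by have := hκ u; omega
  have hκR : (1:ℝ) ≤ (κ:ℝ) := by exact_mod_cast hκ1
  have hD0 : (0:ℝ) < D := by linarith
  have hD1 : (0:ℝ) < D - 1 := by linarith
  -- side predicates and canonical chains
  set Vp : W → Prop := fun x => ∃ l : List E, CFT s t v x l with hVpdef
  set Up : W → Prop := fun x => ∃ l : List E, CFT s t u x l with hUpdef
  have hRex : ∀ x : W, ∃ l : List E,
      (Vp x → CFT s t v x l) ∧ (¬ Vp x → Up x → CFT s t u x l) := by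
    intro x
    by_cases h : Vp x
    · obtain ⟨l, hl⟩ := h
      exact ⟨l, fun _ => hl, fun hn _ => absurd (by exact ⟨l, hl⟩ : Vp x) hn⟩
    · by_cases h2 : Up x
      · obtain ⟨l, hl⟩ := h2
        exact ⟨l, fun hx => absurd hx h, fun _ _ => hl⟩
      · exact ⟨[], fun hx => absurd hx h, fun _ hx => absurd hx h2⟩
  choose R hRV hRU using hRex
  set ψ : W → ℝ := fun x => if Vp x then 1 else 0 with hψdef
  have hVv : Vp v := ⟨[], cft_nil s t v⟩
  have hRvnil : R v = [] := by
    have h := hRV v hVv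
    have hlay := cft_layer s t layer hup h
    exact List.eq_nil_of_length_eq_zero (by omega)
  have hRunil : R u = [] := by
    by_cases h : Vp u
    · have hc := hRV u h
      have hlay := cft_layer s t layer hup hc
      rw [hu, hv] at hlay
      exact List.eq_nil_of_length_eq_zero (by omega)
    · have hUu : Up u := ⟨[], cft_nil s t u⟩
      have hc := hRU u h hUu
      have hlay := cft_layer s t layer hup hc
      exact List.eq_nil_of_length_eq_zero (by omega)
  have hψv : ψ v = 1 := if_pos hVv
  have hψu : u ≠ v → ψ u = 0 := by
    intro hne
    have hnV : ¬ Vp u := by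
      rintro ⟨l, hl⟩
      have hlay := cft_layer s t layer hup hl
      rw [hu, hv] at hlay
      have hl0' : l = [] := List.eq_nil_of_length_eq_zero (by omega)
      subst hl0'
      exact hne ((cft_nil_iff s t).1 hl).symm
    exact if_neg hnV
  -- goodness of support vertices
  have hGood : ∀ e : E, F.1 e ≠ 0 → (Vp (s e) ∧ Vp (t e)) ∨ (Up (s e) ∧ Up (t e)) := by
    intro e he
    have hmem : (∃ i, e ∈ Pv i) ∨ (∃ j, e ∈ Pu j) := by
      by_contra hc
      push_neg at hc
      apply he
      rw [hF1]
      simp only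
      have h1 : ∀ i : Fin n₁, μv i * pathInd (Pv i) e = 0 := by
        intro i
        unfold pathInd
        rw [List.count_eq_zero_of_not_mem (hc.1 i)]
        simp
      have h2 : ∀ j : Fin n₂, μu j * pathInd (Pu j) e = 0 := by
        intro j
        unfold pathInd
        rw [List.count_eq_zero_of_not_mem (hc.2 j)]
        simp
      rw [Finset.sum_eq_zero (fun i _ => h1 i), Finset.sum_eq_zero (fun j _ => h2 j)]
      ring
    rcases hmem with ⟨i, hi⟩ | ⟨j, hj⟩
    · left
      obtain ⟨hne, hchain, hhead⟩ := (hPv i).1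
      obtain ⟨l₁, l₂, hdec⟩ := List.append_of_mem hi
      rw [hdec] at hchain hhead
      obtain ⟨b, hb⟩ := cft_of_chain s t (by simp) hchain hhead
      obtain ⟨h1, h2⟩ := cft_append_split s t hb
      exact ⟨⟨l₁, h1⟩, ⟨l₁ ++ [e], cft_append_edge s t h1 rfl⟩⟩
    · right
      obtain ⟨hne, hchain, hhead⟩ := (hPu j).1
      obtain ⟨l₁, l₂, hdec⟩ := List.append_of_mem hj
      rw [hdec] at hchain hhead
      obtain ⟨b, hb⟩ := cft_of_chain s t (by simp) hchain hhead
      obtain ⟨h1, h2⟩ := cft_append_split s t hb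
      exact ⟨⟨l₁, h1⟩, ⟨l₁ ++ [e], cft_append_edge s t h1 rfl⟩⟩
  set c2E : E → ℝ := fun e => F.1 e * (ψ (s e) - ψ (t e)) with hc2Edef
  -- per-edge decomposition
  have hEdec : ∀ e : E, ∃ cl : List ((E → ℝ) × ℝ),
      (∀ c ∈ cl, IsMonotoneCycle s t u v c) ∧
      (∀ f, (cl.map (fun c => c.1 f)).sum
          = F.1 e * ((((R (s e)) ++ [e]).count f : ℝ) - ((R (t e)).count f : ℝ))) ∧
      ((cl.map Prod.snd).sum = c2E e) ∧
      ((cl.map (fun c => (∑ f, len f * |c.1 f|) + le * |c.2|)).sum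
          ≤ 4 * len e * |F.1 e| + le * |c2E e|) := by
    intro e
    by_cases he : F.1 e = 0
    · refine ⟨[], by simp, ?_, ?_, ?_⟩
      · intro f; simp [he]
      · simp [hc2Edef, he]
      · simp [hc2Edef, he]
    · have hG := hGood e he
      have hRse : CFT s t (if Vp (s e) then v else u) (s e) (R (s e)) := by
        by_cases h : Vp (s e)
        · rw [if_pos h]; exact hRV _ h
        · rw [if_neg h]
          refine hRU _ h ?_
          rcases hG with ⟨h1, -⟩ | ⟨h1, -⟩
          · exact absurd h1 h
          · exact h1
      have hRte : CFT s t (if Vp (t e) then v else u) (t e) (R (t e)) := by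
        by_cases h : Vp (t e)
        · rw [if_pos h]; exact hRV _ h
        · rw [if_neg h]
          refine hRU _ h ?_
          rcases hG with ⟨-, h1⟩ | ⟨-, h1⟩
          · exact absurd h1 h
          · exact h1
      have hPe : CFT s t (if Vp (s e) then v else u) (t e) (R (s e) ++ [e]) :=
        cft_append_edge s t hRse rfl
      have hspec : ((if Vp (s e) then v else u) = (if Vp (t e) then v else u) ∧ c2E e = 0)
          ∨ ((if Vp (s e) then v else u) = v ∧ (if Vp (t e) then v else u) = u
              ∧ c2E e = F.1 e)
          ∨ ((if Vp (s e) then v else u) = u ∧ (if Vp (t e) then v else u) = v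
              ∧ c2E e = -(F.1 e)) := by
        by_cases h1 : Vp (s e) <;> by_cases h2 : Vp (t e)
        · exact Or.inl ⟨by rw [if_pos h1, if_pos h2],
            by simp only [hc2Edef, hψdef]; rw [if_pos h1, if_pos h2]; ring⟩
        · exact Or.inr (Or.inl ⟨by rw [if_pos h1], by rw [if_neg h2],
            by simp only [hc2Edef, hψdef]; rw [if_pos h1, if_neg h2]; ring⟩)
        · exact Or.inr (Or.inr ⟨by rw [if_neg h1], by rw [if_pos h2],
            by simp only [hc2Edef, hψdef]; rw [if_neg h1, if_pos h2]; ring⟩)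
        · exact Or.inl ⟨by rw [if_neg h1, if_neg h2],
            by simp only [hc2Edef, hψdef]; rw [if_neg h1, if_neg h2]; ring⟩
      obtain ⟨cl, hm, hf, hc2, hco⟩ := split_rec s t layer hup u v len hl0 le hle.le
        ((R (s e) ++ [e]).length + (R (t e)).length) (R (s e) ++ [e]) (R (t e)) le_rfl
        (F.1 e) (c2E e) _ _ (t e) hPe hRte hspec
      refine ⟨cl, hm, hf, hc2, ?_⟩
      have hb1 := cft_len_bound s t layer hup γ D hγ hD len hlen hRse
      have hb2 := cft_len_bound s t layer hup γ D hγ hD len hlen hRte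
      have hstart1 : layer (if Vp (s e) then v else u) = 0 := by
        split_ifs
        · exact hv
        · exact hu
      have hstart2 : layer (if Vp (t e) then v else u) = 0 := by
        split_ifs
        · exact hv
        · exact hu
      rw [hstart1] at hb1
      rw [hstart2] at hb2
      have hlte : layer (t e) = layer (s e) + 1 := hup e
      rw [hlte] at hb2
      simp only [pow_zero] at hb1 hb2
      have hpow : D ^ (layer (s e) + 1) = D ^ layer (s e) * D := pow_succ D (layer (s e))
      have hpos : (0:ℝ) < D ^ layer (s e) := by positivity
      have hlenP : ((R (s e) ++ [e]).map len).sum = ((R (s e)).map len).sum + len e := by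
        rw [List.map_append, List.sum_append]
        simp
      have hS : ((R (s e) ++ [e]).map len).sum + ((R (t e)).map len).sum ≤ 4 * len e := by
        rw [hlenP, hlen e]
        have hD2 : (0:ℝ) ≤ D - 2 := by linarith
        have key : (D - 1) * (((R (s e)).map len).sum + ((R (t e)).map len).sum)
            ≤ (D - 1) * (3 * (γ * D ^ layer (s e))) := by
          nlinarith [hb1, hb2, hpow, hpos, hγ, mul_nonneg (mul_nonneg hγ.le hD2) hpos.le]
        have h5 : ((R (s e)).map len).sum + ((R (t e)).map len).sum
            ≤ 3 * (γ * D ^ layer (s e)) := (mul_le_mul_iff_right₀ hD1).1 key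
        nlinarith [h5]
      calc (cl.map (fun c => (∑ f, len f * |c.1 f|) + le * |c.2|)).sum
          ≤ |F.1 e| * (((R (s e) ++ [e]).map len).sum + ((R (t e)).map len).sum)
            + le * |c2E e| := hco
        _ ≤ |F.1 e| * (4 * len e) + le * |c2E e| := by
            have := mul_le_mul_of_nonneg_left hS (abs_nonneg (F.1 e))
            linarith
        _ = 4 * len e * |F.1 e| + le * |c2E e| := by ring
  choose clE hmonoE hflowE hc2E hcostE using hEdec
  -- conservation rearranged
  have hOutIn : ∀ x : W,
      (∑ e, if s e = x then F.1 e else 0) - (∑ e, if t e = x then F.1 e else 0)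
        = (if x = v then F.2 else 0) - (if x = u then F.2 else 0) := by
    intro x
    have h := hCirc x
    unfold net at h
    linarith
  -- telescoping
  have htel : ∀ ρ : W → ℝ,
      (∑ e, F.1 e * (ρ (s e) - ρ (t e))) = F.2 * ρ v - F.2 * ρ u := by
    intro ρ
    have expand : ∀ e : E, F.1 e * (ρ (s e) - ρ (t e))
        = F.1 e * ρ (s e) - F.1 e * ρ (t e) := fun e => by ring
    rw [Finset.sum_congr rfl (fun e _ => expand e), Finset.sum_sub_distrib]
    have hgroup : ∀ g : E → W, (∑ e, F.1 e * ρ (g e))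
        = ∑ x : W, (∑ e, if g e = x then F.1 e else 0) * ρ x := by
      intro g
      have h2 : ∀ x : W, ∑ e ∈ Finset.univ.filter (fun e => g e = x), F.1 e * ρ (g e)
          = (∑ e, if g e = x then F.1 e else 0) * ρ x := by
        intro x
        calc ∑ e ∈ Finset.univ.filter (fun e => g e = x), F.1 e * ρ (g e)
            = ∑ e ∈ Finset.univ.filter (fun e => g e = x), F.1 e * ρ x := by
              refine Finset.sum_congr rfl fun e he => ?_
              rw [(Finset.mem_filter.1 he).2]
          _ = (∑ e ∈ Finset.univ.filter (fun e => g e = x), F.1 e) * ρ x := by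
              rw [Finset.sum_mul]
          _ = (∑ e, if g e = x then F.1 e else 0) * ρ x := by
              rw [Finset.sum_filter]
      refine Eq.symm ?_
      calc (∑ x : W, (∑ e, if g e = x then F.1 e else 0) * ρ x)
          = ∑ x : W, ∑ e ∈ Finset.univ.filter (fun e => g e = x), F.1 e * ρ (g e) :=
            Finset.sum_congr rfl (fun x _ => (h2 x).symm)
        _ = ∑ e, F.1 e * ρ (g e) :=
            Finset.sum_fiberwise_of_maps_to (fun e _ => Finset.mem_univ (g e)) _
    rw [hgroup s, hgroup t, ← Finset.sum_sub_distrib]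
    have h3 : ∀ x : W,
        (∑ e, if s e = x then F.1 e else 0) * ρ x
          - (∑ e, if t e = x then F.1 e else 0) * ρ x
        = (if x = v then F.2 * ρ x else 0) - (if x = u then F.2 * ρ x else 0) := by
      intro x
      have h := hOutIn x
      have h4 : (∑ e, if s e = x then F.1 e else 0) * ρ x
          - (∑ e, if t e = x then F.1 e else 0) * ρ x
          = ((if x = v then F.2 else 0) - (if x = u then F.2 else 0)) * ρ x := by
        rw [← h]; ring
      rw [h4]
      split_ifs <;> ring
    rw [Finset.sum_congr rfl (fun x _ => h3 x), Finset.sum_sub_distrib,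
      Finset.sum_ite_eq' Finset.univ v (fun x => F.2 * ρ x),
      Finset.sum_ite_eq' Finset.univ u (fun x => F.2 * ρ x)]
    simp
  set T : ℝ := ∑ e, c2E e with hTdef
  have hTval : T = F.2 * ψ v - F.2 * ψ u := by
    rw [hTdef]
    exact htel ψ
  set c₀ : (E → ℝ) × ℝ := (fun _ => (0:ℝ), F.2 - T) with hc₀def
  have hmono0 : IsMonotoneCycle s t u v c₀ := by
    constructor
    · intro w
      unfold net
      by_cases huv : u = v
      · subst huv; simp [hc₀def]
      · have hT2 : T = F.2 := by rw [hTval, hψv, hψu huv]; ring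
        simp [hc₀def, hT2]
    · refine ⟨F.2 - T, [], [], List.isChain_nil, List.isChain_nil, List.nodup_nil,
        List.nodup_nil, by simp, ?_, Or.inl rfl⟩
      funext e
      simp [hc₀def, pathInd]
  -- combine over all edges
  have hcomb : ∀ l : List E, ∃ cl : List ((E → ℝ) × ℝ),
      (∀ c ∈ cl, IsMonotoneCycle s t u v c) ∧
      (∀ f, (cl.map (fun c => c.1 f)).sum
          = (l.map (fun e =>
              F.1 e * ((((R (s e)) ++ [e]).count f : ℝ) - ((R (t e)).count f : ℝ)))).sum) ∧
      ((cl.map Prod.snd).sum = (l.map c2E).sum) ∧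
      ((cl.map (fun c => (∑ f, len f * |c.1 f|) + le * |c.2|)).sum
          ≤ (l.map (fun e => 4 * len e * |F.1 e| + le * |c2E e|)).sum) := by
    intro l
    induction l with
    | nil => exact ⟨[], by simp, by simp, by simp, by simp⟩
    | cons e l ih =>
      obtain ⟨cl, h1, h2, h3, h4⟩ := ih
      refine ⟨clE e ++ cl, ?_, ?_, ?_, ?_⟩
      · intro c hc
        rcases List.mem_append.1 hc with h | h
        · exact hmonoE e c h
        · exact h1 c h
      · intro f
        rw [List.map_append, List.sum_append, hflowE e f, h2 f, List.map_cons, List.sum_cons]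
      · rw [List.map_append, List.sum_append, hc2E e, h3, List.map_cons, List.sum_cons]
      · rw [List.map_append, List.sum_append, List.map_cons, List.sum_cons]
        exact add_le_add (hcostE e) h4
  obtain ⟨clBig, hB1, hB2, hB3, hB4⟩ := hcomb Finset.univ.toList
  -- totals
  have hflowtot : ∀ f, (clBig.map (fun c => c.1 f)).sum = F.1 f := by
    intro f
    rw [hB2 f, Finset.sum_map_toList]
    have expand : ∀ e : E,
        F.1 e * (((R (s e) ++ [e]).count f : ℝ) - ((R (t e)).count f : ℝ))
        = (if f = e then F.1 e else 0)
          + F.1 e * ((((R (s e)).count f : ℝ)) - (((R (t e)).count f : ℝ))) := by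
      intro e
      have hca : ((R (s e) ++ [e]).count f : ℝ)
          = ((R (s e)).count f : ℝ) + (if f = e then 1 else 0) := by
        rw [List.count_append]
        push_cast
        rw [count_cons_real e f []]
        simp
      rw [hca]
      split_ifs <;> ring
    rw [Finset.sum_congr rfl (fun e _ => expand e), Finset.sum_add_distrib,
      Finset.sum_ite_eq Finset.univ f F.1, htel (fun x => ((R x).count f : ℝ))]
    simp [hRvnil, hRunil]
  have hc2tot : (clBig.map Prod.snd).sum = T := by
    rw [hB3, Finset.sum_map_toList]
  have hcosttot : (clBig.map (fun c => (∑ f, len f * |c.1 f|) + le * |c.2|)).sum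
      ≤ ∑ e, (4 * len e * |F.1 e| + le * |c2E e|) := by
    calc (clBig.map (fun c => (∑ f, len f * |c.1 f|) + le * |c.2|)).sum
        ≤ (Finset.univ.toList.map (fun e => 4 * len e * |F.1 e| + le * |c2E e|)).sum := hB4
      _ = ∑ e, (4 * len e * |F.1 e| + le * |c2E e|) := Finset.sum_map_toList _ _
  -- final assembly
  set L : List ((E → ℝ) × ℝ) := c₀ :: clBig with hLdef
  have hconv : ∀ g : ((E → ℝ) × ℝ) → ℝ, (∑ i : Fin L.length, g (L.get i)) = (L.map g).sum := by
    intro g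
    calc (∑ i : Fin L.length, g (L.get i)) = (List.ofFn (fun i => g (L.get i))).sum :=
          (Fin.sum_ofFn _).symm
      _ = ((List.ofFn L.get).map g).sum := by rw [List.map_ofFn]; rfl
      _ = (L.map g).sum := by rw [List.ofFn_get]
  refine ⟨L.length, fun i => L.get i, ?_, ?_, ?_, ?_⟩
  · intro i
    show IsMonotoneCycle s t u v (L.get i)
    have hmem : L.get i ∈ L := by apply List.get_mem
    rcases List.mem_cons.1 hmem with h | h
    · rw [h]; exact hmono0
    · exact hB1 _ h
  · funext f
    rw [hconv (fun c => c.1 f), hLdef, List.map_cons, List.sum_cons, hflowtot f, hc₀def]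
    simp
  · rw [hconv Prod.snd, hLdef, List.map_cons, List.sum_cons, hc2tot, hc₀def]
    simp
  · rw [hconv (fun c => (∑ e, len e * |c.1 e|) + le * |c.2|), hLdef, List.map_cons,
      List.sum_cons]
    have hc0c : ((∑ e, len e * |c₀.1 e|) + le * |c₀.2|) = le * |F.2 - T| := by
      rw [hc₀def]
      simp
    have hX0 : 0 ≤ ∑ e, len e * |F.1 e| :=
      Finset.sum_nonneg fun e _ => mul_nonneg (hl0 e) (abs_nonneg _)
    have hsum_split : ∑ e, (4 * len e * |F.1 e| + le * |c2E e|)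
        = 4 * (∑ e, len e * |F.1 e|) + le * (∑ e, |c2E e|) := by
      rw [Finset.sum_add_distrib, Finset.mul_sum, Finset.mul_sum]
      congr 1
      refine Finset.sum_congr rfl fun e _ => by ring
    have hmain : (∑ e, len e * |c₀.1 e|) + le * |c₀.2|
        + (clBig.map (fun c => (∑ e, len e * |c.1 e|) + le * |c.2|)).sum
        ≤ le * |F.2 - T| + (4 * (∑ e, len e * |F.1 e|) + le * (∑ e, |c2E e|)) := by
      rw [hc0c]
      have := hcosttot
      rw [hsum_split] at this
      linarith
    refine le_trans hmain ?_
    by_cases huv : u = v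
    · -- u = v : all extra-edge parts of edge cycles vanish
      have hc2E0 : ∀ e, c2E e = 0 := by
        intro e
        by_cases he : F.1 e = 0
        · simp [hc2Edef, he]
        · rcases hGood e he with ⟨h1, h2⟩ | ⟨h1, h2⟩
          · simp only [hc2Edef, hψdef, if_pos h1, if_pos h2]
            ring
          · have h1' : Vp (s e) := by
              obtain ⟨l, hl⟩ := h1
              exact ⟨l, huv ▸ hl⟩
            have h2' : Vp (t e) := by
              obtain ⟨l, hl⟩ := h2
              exact ⟨l, huv ▸ hl⟩
            simp only [hc2Edef, hψdef, if_pos h1', if_pos h2']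
            ring
      have hT0 : T = 0 := by
        rw [hTdef]
        exact Finset.sum_eq_zero fun e _ => hc2E0 e
      have hc2sum0 : (∑ e, |c2E e|) = 0 :=
        Finset.sum_eq_zero fun e _ => by rw [hc2E0 e]; simp
      rw [hT0, hc2sum0]
      have h1 : le * |F.2 - 0| = le * |F.2| := by norm_num
      rw [h1]
      have hle2 : 0 ≤ le * |F.2| := mul_nonneg hle.le (abs_nonneg _)
      nlinarith [mul_nonneg (by linarith : (0:ℝ) ≤ 4 * (κ:ℝ) - 4) hX0,
        mul_nonneg (by linarith : (0:ℝ) ≤ 4 * (κ:ℝ) - 1) hle2]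
    · -- u ≠ v
      have hTF : T = F.2 := by
        rw [hTval, hψv, hψu huv]
        ring
      have habs : ∀ e, |c2E e| ≤ |F.1 e| := by
        intro e
        rw [hc2Edef]
        simp only
        rw [abs_mul]
        have hd1 : |ψ (s e) - ψ (t e)| ≤ 1 := by
          simp only [hψdef]
          by_cases h1 : Vp (s e) <;> by_cases h2 : Vp (t e) <;>
            simp [h1, h2] <;> norm_num
        calc |F.1 e| * |ψ (s e) - ψ (t e)| ≤ |F.1 e| * 1 :=
              mul_le_mul_of_nonneg_left hd1 (abs_nonneg _)
          _ = |F.1 e| := mul_one _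
      -- mass identities
      have hINzero : ∀ x : W, layer x = 0 → (∑ e, if t e = x then F.1 e else 0) = 0 := by
        intro x hx
        refine Finset.sum_eq_zero fun e _ => if_neg fun h => ?_
        have h2 := hup e
        rw [h, hx] at h2
        omega
      have hOUTv : (∑ e, if s e = v then F.1 e else 0) = F.2 := by
        have h := hOutIn v
        rw [hINzero v hv, if_pos rfl, if_neg (fun q => huv q.symm)] at h
        linarith
      have hOUTu : (∑ e, if s e = u then F.1 e else 0) = -F.2 := by
        have h := hOutIn u
        rw [hINzero u hu, if_pos rfl, if_neg huv] at h
        linarith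
      -- per-path start-vertex sums and length bounds
      have hpathsum : ∀ (w0 : W) (l : List E), layer w0 = 0 → l ≠ [] →
          l.Chain' (fun a b => t a = s b) → (∀ a ∈ l.head?, s a = w0) →
          (∀ x : W, layer x = 0 →
            (∑ e, if s e = x then (l.count e : ℝ) else 0) = if x = w0 then 1 else 0)
          ∧ ((l.length : ℝ) ≤ (κ:ℝ) - 1) := by
        intro w0 l hw0 hne hchain hhead
        obtain ⟨b, hb⟩ := cft_of_chain s t hne hchain hhead
        have hlayb := cft_layer s t layer hup hb
        rw [hw0] at hlayb
        have hlen1 : 1 ≤ l.length := List.length_pos_iff.2 hne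
        constructor
        · intro x hx
          have hnc := net_chain s t 1 hb x
          have hzero : (∑ e, if t e = x then 1 * (l.count e : ℝ) else 0) = 0 := by
            refine Finset.sum_eq_zero fun e _ => if_neg fun h => ?_
            have h2 := hup e
            rw [h, hx] at h2
            omega
          rw [hzero] at hnc
          have hxb : (if x = b then (1:ℝ) else 0) = 0 :=
            if_neg fun h => by rw [h] at hx; omega
          rw [hxb] at hnc
          have hfin : (∑ e, if s e = x then 1 * (l.count e : ℝ) else 0)
              = if x = w0 then 1 else 0 := by linarith
          have hone : ∀ e : E, (if s e = x then 1 * (l.count e : ℝ) else 0)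
              = (if s e = x then (l.count e : ℝ) else 0) := fun e => by
            split_ifs <;> ring
          rw [Finset.sum_congr rfl fun e _ => hone e] at hfin
          exact hfin
        · have hb2 := hκ b
          have h9 : l.length + 1 ≤ κ := by omega
          have h10 : ((l.length : ℝ)) + 1 ≤ (κ:ℝ) := by exact_mod_cast h9
          linarith
      have hPvS := fun i => hpathsum v (Pv i) hv ((hPv i).1).1 ((hPv i).1).2.1 ((hPv i).1).2.2
      have hPuS := fun j => hpathsum u (Pu j) hu ((hPu j).1).1 ((hPu j).1).2.1 ((hPu j).1).2.2
      -- expanding the out-flow at a layer-0 vertex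
      have hswap : ∀ x : W, (∑ e, if s e = x then F.1 e else 0)
          = (∑ i, μv i * (∑ e, if s e = x then ((Pv i).count e : ℝ) else 0))
            + (∑ j, μu j * (∑ e, if s e = x then ((Pu j).count e : ℝ) else 0)) := by
        intro x
        rw [hF1]
        simp only
        have hpt : ∀ e : E,
            (if s e = x then ((∑ i, μv i * pathInd (Pv i) e)
              + ∑ j, μu j * pathInd (Pu j) e) else 0)
            = (∑ i, if s e = x then μv i * ((Pv i).count e : ℝ) else 0)
              + (∑ j, if s e = x then μu j * ((Pu j).count e : ℝ) else 0) := by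
          intro e
          unfold pathInd
          split_ifs with h <;> simp
        rw [Finset.sum_congr rfl fun e _ => hpt e, Finset.sum_add_distrib,
          Finset.sum_comm, Finset.sum_comm (γ := E)]
        congr 1
        · refine Finset.sum_congr rfl fun i _ => ?_
          rw [Finset.mul_sum]
          refine Finset.sum_congr rfl fun e _ => ?_
          split_ifs <;> ring
        · refine Finset.sum_congr rfl fun j _ => ?_
          rw [Finset.mul_sum]
          refine Finset.sum_congr rfl fun e _ => ?_
          split_ifs <;> ring
      have hmuv : (∑ i, μv i) = F.2 := by
        have h := hswap v
        rw [hOUTv] at h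
        have h1 : ∀ i, μv i * (∑ e, if s e = v then ((Pv i).count e : ℝ) else 0) = μv i := by
          intro i
          rw [(hPvS i).1 v hv, if_pos rfl, mul_one]
        have h2 : ∀ j, μu j * (∑ e, if s e = v then ((Pu j).count e : ℝ) else 0) = 0 := by
          intro j
          rw [(hPuS j).1 v hv, if_neg (fun q => huv q.symm), mul_zero]
        rw [Finset.sum_congr rfl fun i _ => h1 i, Finset.sum_congr rfl fun j _ => h2 j,
          Finset.sum_const_zero, add_zero] at h
        linarith
      have hmuu : (∑ j, μu j) = -F.2 := by
        have h := hswap u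
        rw [hOUTu] at h
        have h1 : ∀ i, μv i * (∑ e, if s e = u then ((Pv i).count e : ℝ) else 0) = 0 := by
          intro i
          rw [(hPvS i).1 u hu, if_neg huv, mul_zero]
        have h2 : ∀ j, μu j * (∑ e, if s e = u then ((Pu j).count e : ℝ) else 0) = μu j := by
          intro j
          rw [(hPuS j).1 u hu, if_pos rfl, mul_one]
        rw [Finset.sum_congr rfl fun i _ => h1 i, Finset.sum_congr rfl fun j _ => h2 j,
          Finset.sum_const_zero, zero_add] at h
        linarith
      -- signs
      have habsv : (∑ i, |μv i|) = |F.2| := by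
        rcases hε with rfl | rfl
        · have hp : ∀ i, 0 < μv i := fun i => by have := (hPv i).2; linarith
          have hF2 : 0 ≤ F.2 := by
            rw [← hmuv]; exact Finset.sum_nonneg fun i _ => (hp i).le
          rw [abs_of_nonneg hF2, ← hmuv]
          exact Finset.sum_congr rfl fun i _ => abs_of_pos (hp i)
        · have hp : ∀ i, μv i < 0 := fun i => by have := (hPv i).2; nlinarith
          have hF2 : F.2 ≤ 0 := by
            rw [← hmuv]; exact Finset.sum_nonpos fun i _ => (hp i).le
          rw [abs_of_nonpos hF2, ← hmuv, ← Finset.sum_neg_distrib]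
          exact Finset.sum_congr rfl fun i _ => abs_of_neg (hp i)
      have habsu : (∑ j, |μu j|) = |F.2| := by
        rcases hε with rfl | rfl
        · have hpv : ∀ i, 0 < μv i := fun i => by have := (hPv i).2; linarith
          have hp : ∀ j, μu j < 0 := fun j => by have := (hPu j).2; linarith
          have hF2 : 0 ≤ F.2 := by
            rw [← hmuv]; exact Finset.sum_nonneg fun i _ => (hpv i).le
          have h2 : -(∑ j, μu j) = F.2 := by rw [hmuu]; ring
          rw [abs_of_nonneg hF2, ← h2, ← Finset.sum_neg_distrib]
          exact Finset.sum_congr rfl fun j _ => abs_of_neg (hp j)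
        · have hpv : ∀ i, μv i < 0 := fun i => by have := (hPv i).2; nlinarith
          have hp : ∀ j, 0 < μu j := fun j => by have := (hPu j).2; nlinarith
          have hF2 : F.2 ≤ 0 := by
            rw [← hmuv]; exact Finset.sum_nonpos fun i _ => (hpv i).le
          have h2 : (∑ j, μu j) = -F.2 := hmuu
          rw [abs_of_nonpos hF2, ← h2]
          exact Finset.sum_congr rfl fun j _ => abs_of_pos (hp j)
      -- per-edge triangle inequality and total mass bound
      have hFe : ∀ e, |F.1 e| ≤ (∑ i, |μv i| * ((Pv i).count e : ℝ))
          + (∑ j, |μu j| * ((Pu j).count e : ℝ)) := by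
        intro e
        rw [hF1]
        simp only
        have h1 : |∑ i, μv i * pathInd (Pv i) e| ≤ ∑ i, |μv i| * ((Pv i).count e : ℝ) := by
          calc |∑ i, μv i * pathInd (Pv i) e| ≤ ∑ i, |μv i * pathInd (Pv i) e| :=
                Finset.abs_sum_le_sum_abs _ _
            _ = ∑ i, |μv i| * ((Pv i).count e : ℝ) := Finset.sum_congr rfl fun i _ => by
                unfold pathInd
                rw [abs_mul, Nat.abs_cast]
        have h2 : |∑ j, μu j * pathInd (Pu j) e| ≤ ∑ j, |μu j| * ((Pu j).count e : ℝ) := by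
          calc |∑ j, μu j * pathInd (Pu j) e| ≤ ∑ j, |μu j * pathInd (Pu j) e| :=
                Finset.abs_sum_le_sum_abs _ _
            _ = ∑ j, |μu j| * ((Pu j).count e : ℝ) := Finset.sum_congr rfl fun j _ => by
                unfold pathInd
                rw [abs_mul, Nat.abs_cast]
        calc |(∑ i, μv i * pathInd (Pv i) e) + ∑ j, μu j * pathInd (Pu j) e|
            ≤ |∑ i, μv i * pathInd (Pv i) e| + |∑ j, μu j * pathInd (Pu j) e| := abs_add_le _ _
          _ ≤ _ := add_le_add h1 h2
      have hFtot : (∑ e, |F.1 e|) ≤ 2 * ((κ:ℝ) - 1) * |F.2| := by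
        have h1 : (∑ e, |F.1 e|) ≤ ∑ e, ((∑ i, |μv i| * ((Pv i).count e : ℝ))
            + (∑ j, |μu j| * ((Pu j).count e : ℝ))) :=
          Finset.sum_le_sum fun e _ => hFe e
        have h2 : ∑ e, ((∑ i, |μv i| * ((Pv i).count e : ℝ))
            + (∑ j, |μu j| * ((Pu j).count e : ℝ)))
            = (∑ i, |μv i| * ((Pv i).length : ℝ)) + (∑ j, |μu j| * ((Pu j).length : ℝ)) := by
          rw [Finset.sum_add_distrib, Finset.sum_comm, Finset.sum_comm (γ := E)]
          congr 1
          · refine Finset.sum_congr rfl fun i _ => ?_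
            rw [← Finset.mul_sum, sum_count]
          · refine Finset.sum_congr rfl fun j _ => ?_
            rw [← Finset.mul_sum, sum_count]
        have h3 : (∑ i, |μv i| * ((Pv i).length : ℝ)) ≤ ((κ:ℝ) - 1) * ∑ i, |μv i| := by
          rw [Finset.mul_sum]
          refine Finset.sum_le_sum fun i _ => ?_
          calc |μv i| * ((Pv i).length : ℝ) ≤ |μv i| * ((κ:ℝ) - 1) :=
                mul_le_mul_of_nonneg_left (hPvS i).2 (abs_nonneg _)
            _ = ((κ:ℝ) - 1) * |μv i| := by ring
        have h4 : (∑ j, |μu j| * ((Pu j).length : ℝ)) ≤ ((κ:ℝ) - 1) * ∑ j, |μu j| := by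
          rw [Finset.mul_sum]
          refine Finset.sum_le_sum fun j _ => ?_
          calc |μu j| * ((Pu j).length : ℝ) ≤ |μu j| * ((κ:ℝ) - 1) :=
                mul_le_mul_of_nonneg_left (hPuS j).2 (abs_nonneg _)
            _ = ((κ:ℝ) - 1) * |μu j| := by ring
        rw [habsv] at h3
        rw [habsu] at h4
        linarith
      -- conclude
      have hc2tot2 : (∑ e, |c2E e|) ≤ 2 * ((κ:ℝ) - 1) * |F.2| :=
        le_trans (Finset.sum_le_sum fun e _ => habs e) hFtot
      rw [hTF]
      have h0 : le * |F.2 - F.2| = 0 := by simp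
      rw [h0]
      have hle2 : 0 ≤ le * |F.2| := mul_nonneg hle.le (abs_nonneg _)
      have hstep : le * (∑ e, |c2E e|) ≤ le * (2 * ((κ:ℝ) - 1) * |F.2|) :=
        mul_le_mul_of_nonneg_left hc2tot2 hle.le
      nlinarith [mul_nonneg (by linarith : (0:ℝ) ≤ 4 * (κ:ℝ) - 4) hX0,
        mul_nonneg (by linarith : (0:ℝ) ≤ 2 * (κ:ℝ) + 2) hle2]
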